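/- arXiv:0705.3458 — 2 statements merged into one kernel-verified Lean document; each statement's English description precedes it below -/
import Mathlib

section
/- Let ρ be a partial resolution of a connected ribbon graph Γ that is not split, and let e be an unresolved edge. Then e is nugatory (one of ρ resolved at e to 0 or to 1 is split) if and only if Γ₀(ρ,e) or Γ₁(ρ,e) is disconnected; moreover if Γ₀(ρ,e) is disconnected then |γ_{ρ₁}| = |γ_ρ| − 1 and |γ_{ρ₀}| = |γ_ρ|, while if Γ₁(ρ,e) is disconnected then |γ_{ρ₀}| = |γ_ρ| and |γ_{ρ₁}| = |γ_ρ| + 1. -/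
open Equiv

noncomputable section

/-- Number of orbits of the map `f` on `α` (the equivalence generated by `i ~ f i`). -/
def orbCountOf {α : Type*} (f : α → α) : ℕ :=
  Nat.card (Quot (fun i j : α => j = f i))

/-- `x` lies on the arc of the cycle of `f` starting at `a` strictly before reaching `b`. -/
def ReachesBefore {α : Type*} (f : α → α) (a x b : α) : Prop :=
  ∃ m : ℕ, f^[m] a = x ∧ ∀ k ≤ m, f^[k] a ≠ b

/-- The chords `{a,b}` and `{c,d}` of the cycle parametrized by `f` intersect:
exactly one of `c`, `d` lies on the arc from `a` to `b`. -/
def ChordsCross {α : Type*} (f : α → α) (a b c d : α) : Prop :=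
  ¬ (ReachesBefore f a c b ↔ ReachesBefore f a d b)

/-- A combinatorial oriented ribbon graph on `2 * n` half-edges, given by a vertex
permutation `σ0` and a fixed-point free involution `σ1` pairing the half-edges
into edges.  Vertices, edges and faces are the orbits of `σ0`, `σ1`, `σ2 = (σ0 σ1)⁻¹`. -/
structure RibbonGraph (n : ℕ) where
  σ0 : Perm (Fin (2 * n))
  σ1 : Perm (Fin (2 * n))
  invol : σ1 * σ1 = 1
  fixfree : ∀ i, σ1 i ≠ i

namespace RibbonGraph

variable {n : ℕ} (Γ : RibbonGraph n)

/-- The face permutation `σ2 = (σ0 σ1)⁻¹`, so that `σ0 σ1 σ2 = 1`. -/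
def σ2 : Perm (Fin (2 * n)) := (Γ.σ0 * Γ.σ1)⁻¹

/-- `Γ` is connected iff the group generated by `σ0, σ1` acts transitively on half-edges. -/
def Connected : Prop :=
  ∀ i j : Fin (2 * n), ∃ g ∈ Subgroup.closure {Γ.σ0, Γ.σ1}, g i = j

/-- A set `A` of half-edges determines a spanning ribbon subgraph iff it is closed
under the edge involution `σ1`. -/
def Closed (A : Finset (Fin (2 * n))) : Prop := ∀ i ∈ A, Γ.σ1 i ∈ A

/-- The number of vertices (orbits of `σ0`). -/
def vCount : ℕ := orbCountOf Γ.σ0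

/-- The number of edges of the spanning subgraph with half-edge set `A`. -/
def eCount (_Γ : RibbonGraph n) (A : Finset (Fin (2 * n))) : ℕ := A.card / 2

/-- Relation whose equivalence classes are the connected components of the spanning
subgraph with half-edge set `A`. -/
def compRel (A : Finset (Fin (2 * n))) (i j : Fin (2 * n)) : Prop :=
  j = Γ.σ0 i ∨ (i ∈ A ∧ j = Γ.σ1 i)

/-- The number of connected components of the spanning subgraph `A`. -/
def kComp (A : Finset (Fin (2 * n))) : ℕ := Nat.card (Quot (Γ.compRel A))

/-- The boundary map of a regular neighborhood of the spanning subgraph `A` on the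
surface of `Γ`: it is `σ0` on half-edges not in `A`, and `σ2⁻¹ = σ0 σ1` on half-edges
in `A`.  Its orbits are the boundary components (faces) of `A`. -/
def bdryMap (A : Finset (Fin (2 * n))) : Fin (2 * n) → Fin (2 * n) :=
  fun i => if i ∈ A then Γ.σ0 (Γ.σ1 i) else Γ.σ0 i

/-- The number of faces (boundary components `|γ_A|`) of the spanning subgraph `A`. -/
def faces (A : Finset (Fin (2 * n))) : ℕ := orbCountOf (Γ.bdryMap A)

/-- The nullity `n(A) = e(A) - v(Γ) + k(A)` of the spanning subgraph `A`. -/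
def nullity (A : Finset (Fin (2 * n))) : ℤ := (Γ.eCount A : ℤ) + Γ.kComp A - Γ.vCount

/-- Twice the genus of the spanning subgraph `A`:
`2 g(A) = 2 k(A) - v(Γ) + e(A) - f(A)`. -/
def twoGenus (A : Finset (Fin (2 * n))) : ℤ :=
  2 * (Γ.kComp A : ℤ) - Γ.vCount + Γ.eCount A - Γ.faces A

/-- The nullity of `A`, as a natural number. -/
def nullNat (A : Finset (Fin (2 * n))) : ℕ := Γ.eCount A + Γ.kComp A - Γ.vCount

/-- The genus of `A`, as a natural number. -/
def genusNat (A : Finset (Fin (2 * n))) : ℕ :=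
  (2 * Γ.kComp A + Γ.eCount A - Γ.vCount - Γ.faces A) / 2

/-- A quasi-tree: a connected spanning ribbon subgraph with exactly one face. -/
def IsQuasiTree (A : Finset (Fin (2 * n))) : Prop :=
  Γ.Closed A ∧ Γ.kComp A = 1 ∧ Γ.faces A = 1

/-- The order of the edge of the half-edge `i`: the minimum of its two half-edge labels. -/
def edgeOrd (i : Fin (2 * n)) : ℕ := min i.1 (Γ.σ1 i).1

/-- The chords of the edges of `i` and `j` intersect in the ordered chord diagram `C_A`
of the boundary curve `γ_A`. -/
def Crosses (A : Finset (Fin (2 * n))) (i j : Fin (2 * n)) : Prop :=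
  ChordsCross (Γ.bdryMap A) i (Γ.σ1 i) j (Γ.σ1 j)

/-- The edge of `i` is live with respect to the quasi-tree `A`: its chord in `C_A`
intersects no lower-ordered chord. -/
def Live (A : Finset (Fin (2 * n))) (i : Fin (2 * n)) : Prop :=
  ∀ j : Fin (2 * n), Γ.edgeOrd j < Γ.edgeOrd i → ¬ Γ.Crosses A i j

open scoped Classical in
/-- The half-edge set `D(A)` of the internally dead edges of the quasi-tree `A`. -/
noncomputable def deadIn (A : Finset (Fin (2 * n))) : Finset (Fin (2 * n)) :=
  A.filter (fun i => ¬ Γ.Live A i)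

open scoped Classical in
/-- The number of externally live edges `|E(A)|` of the quasi-tree `A`. -/
noncomputable def extLiveCount (A : Finset (Fin (2 * n))) : ℕ :=
  (Finset.univ.filter (fun i => i ∉ A ∧ Γ.Live A i)).card / 2

open scoped Classical in
/-- The number of internally live edges `|I(A)|` of the quasi-tree `A`. -/
noncomputable def intLiveCount (A : Finset (Fin (2 * n))) : ℕ :=
  (A.filter (fun i => Γ.Live A i)).card / 2

open scoped Classical in
/-- The Bollobás–Riordan polynomial of `Γ`, via its spanning subgraph expansion
`C(Γ) = Σ_H (X-1)^(k(H)-1) Y^(n(H)) Z^(g(H))`. -/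
noncomputable def BR (X Y Z : ℚ) : ℚ :=
  ∑ A ∈ Finset.univ.filter (fun A : Finset (Fin (2 * n)) => Γ.Closed A),
    (X - 1) ^ (Γ.kComp A - 1) * Y ^ Γ.nullNat A * Z ^ Γ.genusNat A

open scoped Classical in
/-- The set of quasi-trees of `Γ`. -/
noncomputable def quasiTrees : Finset (Finset (Fin (2 * n))) :=
  Finset.univ.filter (fun A => Γ.IsQuasiTree A)

open scoped Classical in
/-- The Tutte polynomial of the graph `G_A` (vertices: the components of `D(A)`;
edges: the internally live edges of `A`), via its spanning subgraph expansion
`T(x,y) = Σ_W (x-1)^(k(W)-1) (y-1)^(n(W))`.  A spanning subgraph `W` of `G_A`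
corresponds to a `σ1`-closed set `S` of internally live half-edges; then
`k(W) = k(D ∪ S)` and `n(W) = k(D ∪ S) + e(S) - k(D)`. -/
noncomputable def TutteGQ (A : Finset (Fin (2 * n))) (x y : ℚ) : ℚ :=
  ∑ S ∈ (A.filter (fun i => Γ.Live A i)).powerset.filter (fun S => Γ.Closed S),
    (x - 1) ^ (Γ.kComp (Γ.deadIn A ∪ S) - 1) *
      (y - 1) ^ (Γ.kComp (Γ.deadIn A ∪ S) + Γ.eCount S - Γ.kComp (Γ.deadIn A))

/-- A partial resolution assigns `some true` / `some false` / `none` ( `*` )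
to half-edges; it should be constant on edges. -/
def EdgeConst (ρ : Fin (2 * n) → Option Bool) : Prop := ∀ i, ρ (Γ.σ1 i) = ρ i

open scoped Classical in
/-- The half-edge set `H_ρ` of the partial resolution `ρ`. -/
noncomputable def Hset (_Γ : RibbonGraph n) (ρ : Fin (2 * n) → Option Bool) : Finset (Fin (2 * n)) :=
  Finset.univ.filter (fun i => ρ i = some true)

/-- `ρ` is split: `f(H_ρ ∪ U) > 1` for every (σ1-closed) set `U` of unresolved edges. -/
def Split (ρ : Fin (2 * n) → Option Bool) : Prop :=
  ∀ U : Finset (Fin (2 * n)), (∀ i ∈ U, ρ i = none) → (∀ i ∈ U, Γ.σ1 i ∈ U) →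
    1 < Γ.faces (Γ.Hset ρ ∪ U)

/-- Resolve the edge of `e` in `ρ` to the value `b`. -/
def resolveEdge (ρ : Fin (2 * n) → Option Bool) (e : Fin (2 * n)) (b : Bool) :
    Fin (2 * n) → Option Bool :=
  fun i => if i = e ∨ i = Γ.σ1 e then some b else ρ i

/-- The unresolved edge `e` is nugatory in `ρ`: one of its two resolutions is split. -/
def Nugatory (ρ : Fin (2 * n) → Option Bool) (e : Fin (2 * n)) : Prop :=
  Γ.Split (Γ.resolveEdge ρ e false) ∨ Γ.Split (Γ.resolveEdge ρ e true)

/-- `Γ(ρ) = γ_ρ ∪ Int(ρ⁻¹(*))` is connected: the boundary components of `H_ρ`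
together with the unresolved edges connect all half-edges. -/
def GammaConn (ρ : Fin (2 * n) → Option Bool) : Prop :=
  ∀ i j : Fin (2 * n),
    Relation.EqvGen
      (fun x y => y = Γ.bdryMap (Γ.Hset ρ) x ∨ (ρ x = none ∧ y = Γ.σ1 x)) i j

/-- The partial resolution seen at the moment the edge of `e` is considered in the
resolution process: edges of higher order keep their value, the rest are unresolved. -/
def restrictAbove (ρ : Fin (2 * n) → Option Bool) (e : Fin (2 * n)) :
    Fin (2 * n) → Option Bool :=
  fun j => if Γ.edgeOrd e < Γ.edgeOrd j then ρ j else none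

/-- `ρ` is a leaf of the binary resolution tree `𝒯`: edges are resolved in decreasing
order, an edge is left unresolved exactly when it is nugatory at its turn. -/
def IsLeaf (ρ : Fin (2 * n) → Option Bool) : Prop :=
  Γ.EdgeConst ρ ∧
  (∀ i, ρ i = none → Γ.Nugatory (Γ.restrictAbove ρ i) i) ∧
  (∀ i, ρ i ≠ none → ¬ Γ.Nugatory (Γ.restrictAbove ρ i) i)

/-- The spanning subgraph `A` lies in the interval `[ρ]` of the Boolean lattice. -/
def MemInterval (_Γ : RibbonGraph n) (ρ : Fin (2 * n) → Option Bool) (A : Finset (Fin (2 * n))) : Prop :=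
  ∀ i, (ρ i = some true → i ∈ A) ∧ (ρ i = some false → i ∉ A)

/-- The pair of half-edges of the edge of `i`. -/
def edgePair (i : Fin (2 * n)) : Finset (Fin (2 * n)) := {i, Γ.σ1 i}

/-- For a spanning tree `A`, `j ∈ cut(A, i)` (equivalently `i ∈ cyc(A, j)`):
the edge of `j` reconnects `A` minus the edge of `i`. -/
def InCut (A : Finset (Fin (2 * n))) (i j : Fin (2 * n)) : Prop :=
  Γ.kComp ((A \ Γ.edgePair i) ∪ Γ.edgePair j) = 1

/-- Tutte's internal activity: `i ∈ A` is internally active iff it is the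
lowest-ordered edge of its cut `cut(A, i)`. -/
def TutteIntActive (A : Finset (Fin (2 * n))) (i : Fin (2 * n)) : Prop :=
  i ∈ A ∧ ∀ j, j ∉ A → Γ.InCut A i j → Γ.edgeOrd i < Γ.edgeOrd j

/-- Tutte's external activity: `j ∉ A` is externally active iff it is the
lowest-ordered edge of its cycle `cyc(A, j)`. -/
def TutteExtActive (A : Finset (Fin (2 * n))) (j : Fin (2 * n)) : Prop :=
  j ∉ A ∧ ∀ i ∈ A, Γ.InCut A i j → Γ.edgeOrd j < Γ.edgeOrd i

end RibbonGraph

end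

noncomputable section PermAux

open Equiv Function

set_option linter.unusedSectionVars false

namespace Stmt13Aux

open Function

variable {α : Type*} [Fintype α] [DecidableEq α]

def Reach (f : Perm α) (x y : α) : Prop := ∃ k : ℕ, f^[k] x = y

lemma reach_refl (f : Perm α) (x : α) : Reach f x x := ⟨0, rfl⟩

lemma reach_step (f : Perm α) (x : α) : Reach f x (f x) := ⟨1, rfl⟩

lemma reach_trans {f : Perm α} {x y z : α} (h1 : Reach f x y) (h2 : Reach f y z) :
    Reach f x z := by
  obtain ⟨k, rfl⟩ := h1; obtain ⟨l, rfl⟩ := h2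
  exact ⟨l + k, Function.iterate_add_apply f l k x⟩

lemma coe_pow' (f : Perm α) (k : ℕ) : ⇑(f ^ k) = f^[k] := rfl

lemma iterate_orderOf (f : Perm α) (x : α) : f^[orderOf f] x = x := by
  have h : f ^ orderOf f = 1 := pow_orderOf_eq_one f
  rw [← coe_pow', h]; rfl

lemma reach_symm {f : Perm α} {x y : α} (h : Reach f x y) : Reach f y x := by
  obtain ⟨k, rfl⟩ := h
  refine ⟨k * orderOf f - k, ?_⟩
  rw [← Function.iterate_add_apply]
  have h1 : 0 < orderOf f := orderOf_pos f
  have h3 : k ≤ k * orderOf f := Nat.le_mul_of_pos_right k h1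
  have h2 : k * orderOf f - k + k = orderOf f * k := by
    rw [Nat.sub_add_cancel h3, mul_comm]
  rw [h2, Function.iterate_mul]
  exact Function.iterate_fixed (iterate_orderOf f x) k

lemma reach_of_eqvGen {f : Perm α} {x y : α}
    (h : Relation.EqvGen (fun i j => j = f i) x y) : Reach f x y := by
  induction h with
  | rel a b hab => exact hab ▸ reach_step f a
  | refl a => exact reach_refl f a
  | symm a b _ ih => exact reach_symm ih
  | trans a b c _ _ ih1 ih2 => exact reach_trans ih1 ih2

lemma eqvGen_of_reach {f : Perm α} {x y : α} (h : Reach f x y) :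
    Relation.EqvGen (fun i j => j = f i) x y := by
  obtain ⟨k, rfl⟩ := h
  induction k with
  | zero => exact .refl x
  | succ k ih => rw [Function.iterate_succ_apply']; exact .trans _ _ _ ih (.rel _ _ rfl)

lemma quot_mk_eq_iff (f : Perm α) (x y : α) :
    Quot.mk (fun i j : α => j = f i) x = Quot.mk (fun i j : α => j = f i) y ↔ Reach f x y :=
  Quot.eq.trans ⟨reach_of_eqvGen, eqvGen_of_reach⟩

variable {f : Perm α} {a b : α}

lemma g_apply_of_ne {x : α} (hx : x ≠ a) (hx' : x ≠ b) : (f * swap a b) x = f x := by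
  simp [Equiv.Perm.mul_apply, swap_apply_of_ne_of_ne hx hx']

lemma g_apply_a : (f * swap a b) a = f b := by simp [Equiv.Perm.mul_apply]

lemma g_apply_b : (f * swap a b) b = f a := by simp [Equiv.Perm.mul_apply]

lemma iterate_g_eq (f : Perm α) (a b x : α) (k : ℕ)
    (h : ∀ i, i < k → f^[i] x ≠ a ∧ f^[i] x ≠ b) : (f * swap a b)^[k] x = f^[k] x := by
  induction k with
  | zero => rfl
  | succ k ih =>
    rw [Function.iterate_succ_apply', Function.iterate_succ_apply',
      ih (fun i hi => h i (by omega))]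
    exact g_apply_of_ne (h k (by omega)).1 (h k (by omega)).2

lemma reach_g_of_not_orbit (hab' : Reach f a b) {x y : α} (hx : ¬ Reach f a x)
    (h : Reach f x y) : Reach (f * swap a b) x y := by
  obtain ⟨k, rfl⟩ := h
  refine ⟨k, iterate_g_eq f a b x k fun i _ => ⟨?_, ?_⟩⟩
  · intro he; exact hx (reach_symm ⟨i, he⟩)
  · intro he; exact hx (reach_trans hab' (reach_symm ⟨i, he⟩))

lemma reach_g_a_b_of_not_reach (h : ¬ Reach f a b) : Reach (f * swap a b) a b := by
  classical
  have hex : ∃ p, 0 < p ∧ f^[p] b = b := ⟨orderOf f, orderOf_pos f, iterate_orderOf f b⟩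
  set p := Nat.find hex with hp
  obtain ⟨hp0, hpb⟩ := Nat.find_spec hex
  have aux : ∀ i, 1 ≤ i → i ≤ p → (f * swap a b)^[i] a = f^[i] b := by
    intro i
    induction i with
    | zero => omega
    | succ i ih =>
      intro _ hip
      by_cases hi : i = 0
      · subst hi
        simpa using g_apply_a
      · have h1 : 1 ≤ i := by omega
        rw [Function.iterate_succ_apply', ih h1 (by omega), Function.iterate_succ_apply']
        refine g_apply_of_ne ?_ ?_
        · intro heq; exact h (reach_symm ⟨i, heq⟩)
        · intro heq
          exact Nat.find_min hex (m := i) (by omega) ⟨by omega, heq⟩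
  exact ⟨p, by rw [aux p hp0 le_rfl, hpb]⟩



lemma not_reach_g_a_b (hab : a ≠ b) (hr : Reach f a b) : ¬ Reach (f * swap a b) a b := by
  classical
  set g := f * swap a b with hg
  have hfb : f b ≠ b := by
    intro hfbb
    obtain ⟨j, hj⟩ := reach_symm hr
    have hfix : f^[j] b = b := Function.iterate_fixed hfbb j
    exact hab (by rw [hfix] at hj; exact hj.symm)
  have inv : ∀ k, g^[k] a = a ∨ ∃ i, 1 ≤ i ∧ g^[k] a = f^[i] b ∧
      ∀ j, 1 ≤ j → j ≤ i → f^[j] b ≠ b ∧ f^[j] b ≠ a := by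
    intro k
    induction k with
    | zero => exact Or.inl rfl
    | succ k ih =>
      rw [Function.iterate_succ_apply']
      rcases ih with h | ⟨i, hi1, hgk, hcond⟩
      · rw [h]
        by_cases hfba : f b = a
        · exact Or.inl (by rw [g_apply_a, hfba])
        · refine Or.inr ⟨1, le_rfl, by rw [g_apply_a]; rfl, ?_⟩
          intro j hj1 hj2
          have hj : j = 1 := by omega
          subst hj
          exact ⟨by simpa using hfb, by simpa using hfba⟩
      · rw [hgk]
        have hxb : f^[i] b ≠ b := (hcond i hi1 le_rfl).1
        have hxa : f^[i] b ≠ a := (hcond i hi1 le_rfl).2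
        rw [g_apply_of_ne hxa hxb]
        have hstep : f ((⇑f)^[i] b) = (⇑f)^[i+1] b := (Function.iterate_succ_apply' f i b).symm
        rw [hstep]
        by_cases hnew_a : f^[i+1] b = a
        · exact Or.inl hnew_a
        · by_cases hnew_b : f^[i+1] b = b
          · exfalso
            obtain ⟨j0, hj0⟩ := reach_symm hr
            have hmod : ∀ q r : ℕ, f^[q * (i+1) + r] b = f^[r] b := by
              intro q r
              induction q with
              | zero => simp
              | succ q ihq =>
                have heq : (q+1) * (i+1) + r = (q * (i+1) + r) + (i+1) := by ring
                rw [heq, Function.iterate_add_apply, hnew_b, ihq]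
            have hj : f^[j0 % (i+1)] b = a := by
              have hd := hmod (j0 / (i+1)) (j0 % (i+1))
              have he2 : j0 / (i+1) * (i+1) + j0 % (i+1) = j0 := by
                rw [mul_comm]
                exact Nat.div_add_mod j0 (i+1)
              rw [he2] at hd
              exact hd.symm.trans hj0
            have hlt : j0 % (i+1) < i + 1 := Nat.mod_lt _ (by omega)
            have hne0 : j0 % (i+1) ≠ 0 := by
              intro h0
              rw [h0] at hj
              simp at hj
              exact hab hj.symm
            exact (hcond (j0 % (i+1)) (by omega) (by omega)).2 hj
          · refine Or.inr ⟨i+1, by omega, rfl, ?_⟩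
            intro j hj1 hj2
            rcases Nat.lt_or_ge j (i+1) with hlt | hge
            · exact hcond j hj1 (by omega)
            · have hj : j = i + 1 := by omega
              subst hj
              exact ⟨hnew_b, hnew_a⟩
  rintro ⟨k, hk⟩
  rcases inv k with h | ⟨i, hi1, hgk, hcond⟩
  · exact hab (by rw [hk] at h; exact h.symm)
  · exact (hcond i hi1 le_rfl).1 (by rw [← hgk]; exact hk)


lemma reach_f_of_reach_g (hr : Reach f a b) {x y : α} (h : Reach (f * swap a b) x y) :
    Reach f x y := by
  obtain ⟨k, rfl⟩ := h
  induction k with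
  | zero => exact reach_refl f x
  | succ k ih =>
    rw [Function.iterate_succ_apply']
    refine reach_trans ih ?_
    set z := (⇑(f * swap a b))^[k] x with hz
    by_cases hza : z = a
    · rw [hza, g_apply_a]
      exact reach_trans hr (reach_step f b)
    · by_cases hzb : z = b
      · rw [hzb, g_apply_b]
        exact reach_trans (reach_symm hr) (reach_step f a)
      · rw [g_apply_of_ne hza hzb]
        exact reach_step f z

lemma reach_g_split (hr : Reach f a b) {x : α} (h : Reach f a x) :
    Reach (f * swap a b) a x ∨ Reach (f * swap a b) b x := by
  obtain ⟨k, rfl⟩ := h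
  induction k with
  | zero => exact Or.inl (reach_refl _ a)
  | succ k ih =>
    rw [Function.iterate_succ_apply']
    set z := (⇑f)^[k] a with hz
    by_cases hza : z = a
    · rw [hza, show f a = (f * swap a b) b from g_apply_b.symm]
      exact Or.inr (reach_step _ b)
    · by_cases hzb : z = b
      · rw [hzb, show f b = (f * swap a b) a from g_apply_a.symm]
        exact Or.inl (reach_step _ a)
      · rw [show f z = (f * swap a b) z from (g_apply_of_ne hza hzb).symm]
        rcases ih with h | h
        · exact Or.inl (reach_trans h (reach_step _ z))
        · exact Or.inr (reach_trans h (reach_step _ z))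

lemma orbCount_split (hab : a ≠ b) (hr : Reach f a b) :
    orbCountOf ⇑(f * swap a b) = orbCountOf ⇑f + 1 := by
  classical
  set g := f * swap a b with hg
  have hnab : ¬ Reach g a b := not_reach_g_a_b hab hr
  let val : α → (Quot (fun i j : α => j = f i)) ⊕ Unit := fun x =>
    if Reach g b x then Sum.inr () else Sum.inl (Quot.mk _ x)
  have hval : ∀ (x y : α), y = g x → val x = val y := by
    intro x y hxy
    subst hxy
    have hiff : Reach g b x ↔ Reach g b (g x) :=
      ⟨fun h => reach_trans h (reach_step g x),
       fun h => reach_trans h (reach_symm (reach_step g x))⟩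
    by_cases hx : Reach g b x
    · simp only [val, if_pos hx, if_pos (hiff.1 hx)]
    · simp only [val, if_neg hx, if_neg (fun h => hx (hiff.2 h))]
      exact congrArg _ ((quot_mk_eq_iff f x (g x)).2 (reach_f_of_reach_g hr (reach_step g x)))
  let F : Quot (fun i j : α => j = g i) → (Quot (fun i j : α => j = f i)) ⊕ Unit :=
    Quot.lift val hval
  have hFmk : ∀ x : α, F (Quot.mk _ x) = val x := fun _ => rfl
  have hinj : Function.Injective F := by
    intro u v
    induction u using Quot.ind with | _ x => ?_
    induction v using Quot.ind with | _ y => ?_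
    intro huv
    rw [hFmk, hFmk] at huv
    simp only [val] at huv
    refine (quot_mk_eq_iff g x y).2 ?_
    by_cases hx : Reach g b x <;> by_cases hy : Reach g b y
    · exact reach_trans (reach_symm hx) hy
    · rw [if_pos hx, if_neg hy] at huv
      exact absurd huv (by simp)
    · rw [if_neg hx, if_pos hy] at huv
      exact absurd huv (by simp)
    · rw [if_neg hx, if_neg hy] at huv
      have hfxy : Reach f x y := (quot_mk_eq_iff f x y).1 (Sum.inl_injective huv)
      by_cases hax : Reach f a x
      · have h1 : Reach g a x := (reach_g_split hr hax).resolve_right hx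
        have h2 : Reach g a y := (reach_g_split hr (reach_trans hax hfxy)).resolve_right hy
        exact reach_trans (reach_symm h1) h2
      · exact reach_g_of_not_orbit hr hax hfxy
  have hsurj : Function.Surjective F := by
    intro s
    rcases s with q | u
    · induction q using Quot.ind with | _ x => ?_
      by_cases hx : Reach g b x
      · refine ⟨Quot.mk _ a, ?_⟩
        have hna : ¬ Reach g b a := fun h => hnab (reach_symm h)
        rw [hFmk]
        simp only [val, if_neg hna]
        refine congrArg _ ((quot_mk_eq_iff f a x).2 ?_)
        exact reach_trans hr (reach_f_of_reach_g hr hx)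
      · exact ⟨Quot.mk _ x, by rw [hFmk]; simp only [val, if_neg hx]⟩
    · exact ⟨Quot.mk _ b, by rw [hFmk]; simp only [val, if_pos (reach_refl g b)]⟩
  have hfinf : Finite (Quot (fun i j : α => j = f i)) :=
    Finite.of_surjective _ Quot.mk_surjective
  have hfing : Finite (Quot (fun i j : α => j = g i)) :=
    Finite.of_surjective _ Quot.mk_surjective
  have hcard : Nat.card (Quot (fun i j : α => j = g i)) =
      Nat.card ((Quot (fun i j : α => j = f i)) ⊕ Unit) :=
    Nat.card_congr (Equiv.ofBijective F ⟨hinj, hsurj⟩)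
  show Nat.card (Quot (fun i j : α => j = g i)) = Nat.card (Quot (fun i j : α => j = f i)) + 1
  rw [hcard, Nat.card_sum]
  simp

lemma orbCount_merge (hab : a ≠ b) (hnr : ¬ Reach f a b) :
    orbCountOf ⇑(f * swap a b) + 1 = orbCountOf ⇑f := by
  have hgr : Reach (f * swap a b) a b := reach_g_a_b_of_not_reach hnr
  have hid : (f * swap a b) * swap a b = f := by
    rw [mul_assoc, swap_mul_self, mul_one]
  have := orbCount_split (f := f * swap a b) hab hgr
  rw [hid] at this
  omega

end Stmt13Aux

end PermAux

noncomputable section GraphAux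

open Equiv Function Stmt13Aux

set_option linter.unusedSectionVars false

namespace RibbonGraph

variable {n : ℕ} (Γ : RibbonGraph n)

lemma sigma1_sigma1 (i : Fin (2 * n)) : Γ.σ1 (Γ.σ1 i) = i := by
  have h := congrArg (fun p : Perm (Fin (2 * n)) => p i) Γ.invol
  simpa [Equiv.Perm.mul_apply] using h

def bInv (A : Finset (Fin (2 * n))) : Fin (2 * n) → Fin (2 * n) :=
  fun x => if x ∈ A then Γ.σ1 x else x

lemma bInv_invol (A : Finset (Fin (2 * n))) (hA : Γ.Closed A) :
    Function.Involutive (Γ.bInv A) := by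
  intro x
  by_cases h : x ∈ A
  · simp [bInv, h, hA x h, Γ.sigma1_sigma1]
  · simp [bInv, h]

open scoped Classical in
def bPerm (A : Finset (Fin (2 * n))) : Perm (Fin (2 * n)) :=
  Γ.σ0 * (if h : Γ.Closed A then (Γ.bInv_invol A h).toPerm else 1)

lemma bPerm_eq (A : Finset (Fin (2 * n))) (hA : Γ.Closed A) :
    ⇑(Γ.bPerm A) = Γ.bdryMap A := by
  funext x
  rw [bPerm, dif_pos hA]
  simp only [Equiv.Perm.mul_apply, Function.Involutive.coe_toPerm]
  by_cases h : x ∈ A <;> simp [bInv, bdryMap, h]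

lemma faces_eq (A : Finset (Fin (2 * n))) (hA : Γ.Closed A) :
    Γ.faces A = orbCountOf ⇑(Γ.bPerm A) := by
  rw [faces, Γ.bPerm_eq A hA]

lemma hset_closed (ρ : Fin (2 * n) → Option Bool) (hρ : Γ.EdgeConst ρ) :
    Γ.Closed (Γ.Hset ρ) := by
  intro i hi
  simp only [Hset, Finset.mem_filter, Finset.mem_univ, true_and] at hi ⊢
  rw [hρ i]
  exact hi

lemma mem_hset (ρ : Fin (2 * n) → Option Bool) (i : Fin (2 * n)) :
    i ∈ Γ.Hset ρ ↔ ρ i = some true := by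
  simp [Hset]

lemma resolveEdge_apply_of_ne (ρ : Fin (2 * n) → Option Bool) (e : Fin (2 * n)) (b : Bool)
    (i : Fin (2 * n)) (h1 : i ≠ e) (h2 : i ≠ Γ.σ1 e) : Γ.resolveEdge ρ e b i = ρ i := by
  simp [resolveEdge, h1, h2]

lemma resolveEdge_none_imp (ρ : Fin (2 * n) → Option Bool) (e : Fin (2 * n)) (b : Bool)
    (i : Fin (2 * n)) (h : Γ.resolveEdge ρ e b i = none) :
    ρ i = none ∧ i ≠ e ∧ i ≠ Γ.σ1 e := by
  by_cases h1 : i = e ∨ i = Γ.σ1 e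
  · rw [resolveEdge, if_pos h1] at h
    exact absurd h (by simp)
  · push_neg at h1
    rw [Γ.resolveEdge_apply_of_ne ρ e b i h1.1 h1.2] at h
    exact ⟨h, h1.1, h1.2⟩

lemma edgeConst_resolve (ρ : Fin (2 * n) → Option Bool) (hρ : Γ.EdgeConst ρ)
    (e : Fin (2 * n)) (b : Bool) : Γ.EdgeConst (Γ.resolveEdge ρ e b) := by
  intro i
  by_cases h1 : i = e
  · subst h1
    simp [resolveEdge]
  · by_cases h2 : i = Γ.σ1 e
    · subst h2
      simp [resolveEdge, Γ.sigma1_sigma1]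
    · have h3 : Γ.σ1 i ≠ e := fun h => h2 (by rw [← h, Γ.sigma1_sigma1])
      have h4 : Γ.σ1 i ≠ Γ.σ1 e := fun h => h1 (Γ.σ1.injective h)
      rw [Γ.resolveEdge_apply_of_ne ρ e b _ h3 h4,
        Γ.resolveEdge_apply_of_ne ρ e b _ h1 h2]
      exact hρ i

lemma hset_resolve_false (ρ : Fin (2 * n) → Option Bool) (hρ : Γ.EdgeConst ρ)
    (e : Fin (2 * n)) (he : ρ e = none) :
    Γ.Hset (Γ.resolveEdge ρ e false) = Γ.Hset ρ := by
  ext i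
  rw [mem_hset, mem_hset]
  by_cases h1 : i = e
  · subst h1
    rw [resolveEdge, if_pos (Or.inl rfl), he]
    simp
  · by_cases h2 : i = Γ.σ1 e
    · subst h2
      rw [resolveEdge, if_pos (Or.inr rfl), hρ e, he]
      simp
    · rw [Γ.resolveEdge_apply_of_ne ρ e false i h1 h2]

lemma hset_resolve_true (ρ : Fin (2 * n) → Option Bool) (hρ : Γ.EdgeConst ρ)
    (e : Fin (2 * n)) (he : ρ e = none) :
    Γ.Hset (Γ.resolveEdge ρ e true) = Γ.Hset ρ ∪ {e, Γ.σ1 e} := by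
  ext i
  rw [Finset.mem_union, mem_hset, mem_hset]
  by_cases h1 : i = e
  · subst h1
    rw [resolveEdge, if_pos (Or.inl rfl), he]
    simp
  · by_cases h2 : i = Γ.σ1 e
    · subst h2
      rw [resolveEdge, if_pos (Or.inr rfl), hρ e, he]
      simp
    · rw [Γ.resolveEdge_apply_of_ne ρ e true i h1 h2]
      simp [h1, h2]

lemma bPerm_union_pair (A : Finset (Fin (2 * n))) (hA : Γ.Closed A) (e : Fin (2 * n))
    (he : e ∉ A) (he' : Γ.σ1 e ∉ A) :
    Γ.bPerm (A ∪ {e, Γ.σ1 e}) = Γ.bPerm A * Equiv.swap e (Γ.σ1 e) := by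
  have hA' : Γ.Closed (A ∪ {e, Γ.σ1 e}) := by
    intro i hi
    rw [Finset.mem_union] at hi ⊢
    rcases hi with hi | hi
    · exact Or.inl (hA i hi)
    · simp only [Finset.mem_insert, Finset.mem_singleton] at hi
      rcases hi with rfl | rfl
      · simp
      · simp [Γ.sigma1_sigma1]
  apply Equiv.ext
  intro x
  have hL : (Γ.bPerm (A ∪ {e, Γ.σ1 e})) x = Γ.bdryMap (A ∪ {e, Γ.σ1 e}) x :=
    congrFun (Γ.bPerm_eq _ hA') x
  have hR : ∀ y, (Γ.bPerm A) y = Γ.bdryMap A y := congrFun (Γ.bPerm_eq A hA)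
  rw [Equiv.Perm.mul_apply, hL, hR]
  by_cases h1 : x = e
  · subst h1
    rw [swap_apply_left]
    simp [bdryMap, he']
  · by_cases h2 : x = Γ.σ1 e
    · subst h2
      rw [swap_apply_right]
      simp [bdryMap, he, Γ.sigma1_sigma1]
    · rw [swap_apply_of_ne_of_ne h1 h2]
      by_cases hx : x ∈ A <;> simp [bdryMap, hx, h1, h2]

lemma eqvGen_mono' {β : Type*} {r p : β → β → Prop}
    (h : ∀ x y, r x y → Relation.EqvGen p x y) {x y : β}
    (hr : Relation.EqvGen r x y) : Relation.EqvGen p x y := by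
  induction hr with
  | rel a b hab => exact h a b hab
  | refl a => exact .refl a
  | symm a b _ ih => exact .symm _ _ ih
  | trans a b c _ _ ih1 ih2 => exact .trans _ _ _ ih1 ih2

lemma gammaConn_of_not_split (ρ : Fin (2 * n) → Option Bool) (hρ : Γ.EdgeConst ρ)
    (h : ¬ Γ.Split ρ) : Γ.GammaConn ρ := by
  classical
  intro i j
  unfold Split at h
  push_neg at h
  obtain ⟨U, hU1, hU2, hU3⟩ := h
  have hfin : Finite (Quot (fun x y : Fin (2 * n) => y = Γ.bdryMap (Γ.Hset ρ ∪ U) x)) :=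
    Finite.of_surjective _ Quot.mk_surjective
  have hpos : 0 < Γ.faces (Γ.Hset ρ ∪ U) := by
    have : Nonempty (Quot (fun x y : Fin (2 * n) => y = Γ.bdryMap (Γ.Hset ρ ∪ U) x)) :=
      ⟨Quot.mk _ i⟩
    exact Nat.card_pos
  have hone : Γ.faces (Γ.Hset ρ ∪ U) = 1 := by omega
  have hsub : Subsingleton (Quot (fun x y : Fin (2 * n) => y = Γ.bdryMap (Γ.Hset ρ ∪ U) x)) :=
    (Nat.card_eq_one_iff_unique.1 hone).1
  have hq : Quot.mk _ i = Quot.mk (fun x y : Fin (2 * n) => y = Γ.bdryMap (Γ.Hset ρ ∪ U) x) j :=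
    Subsingleton.elim _ _
  have hgen := Quot.eq.1 hq
  refine eqvGen_mono' ?_ hgen
  intro x y hxy
  by_cases hxU : x ∈ U
  · have hx_none : ρ x = none := hU1 x hxU
    have hsx_none : ρ (Γ.σ1 x) = none := by rw [hρ x]; exact hx_none
    have hsxH : Γ.σ1 x ∉ Γ.Hset ρ := by rw [mem_hset, hsx_none]; simp
    have h1 : y = Γ.σ0 (Γ.σ1 x) := by
      rw [hxy]
      simp [bdryMap, Finset.mem_union, hxU]
    have step1 : Relation.EqvGen (fun x y : Fin (2 * n) =>
        y = Γ.bdryMap (Γ.Hset ρ) x ∨ (ρ x = none ∧ y = Γ.σ1 x)) x (Γ.σ1 x) :=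
      .rel _ _ (Or.inr ⟨hx_none, rfl⟩)
    have step2 : Relation.EqvGen (fun x y : Fin (2 * n) =>
        y = Γ.bdryMap (Γ.Hset ρ) x ∨ (ρ x = none ∧ y = Γ.σ1 x)) (Γ.σ1 x) y := by
      refine .rel _ _ (Or.inl ?_)
      rw [h1]
      simp [bdryMap, hsxH]
    exact .trans _ _ _ step1 step2
  · refine .rel _ _ (Or.inl ?_)
    rw [hxy]
    by_cases hxH : x ∈ Γ.Hset ρ <;> simp [bdryMap, Finset.mem_union, hxH, hxU]

end RibbonGraph

end GraphAux


noncomputable section GraphAux2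

open Equiv Function Stmt13Aux

set_option linter.unusedSectionVars false

namespace RibbonGraph

variable {n : ℕ} (Γ : RibbonGraph n)

/-- The relation generating `Γ(ρ)`. -/
abbrev GRel (ρ : Fin (2 * n) → Option Bool) (x y : Fin (2 * n)) : Prop :=
  y = Γ.bdryMap (Γ.Hset ρ) x ∨ (ρ x = none ∧ y = Γ.σ1 x)

lemma gammaConn_iff (ρ : Fin (2 * n) → Option Bool) :
    Γ.GammaConn ρ ↔ ∀ i j, Relation.EqvGen (Γ.GRel ρ) i j := Iff.rfl

lemma eqvGen_of_reach_bPerm (ρ : Fin (2 * n) → Option Bool) (hρ : Γ.EdgeConst ρ)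
    {x y : Fin (2 * n)} (h : Reach (Γ.bPerm (Γ.Hset ρ)) x y) :
    Relation.EqvGen (Γ.GRel ρ) x y := by
  refine eqvGen_mono' ?_ (eqvGen_of_reach h)
  intro u v huv
  refine .rel _ _ (Or.inl ?_)
  rw [huv, ← Γ.bPerm_eq _ (Γ.hset_closed ρ hρ)]

/-- Resolving (to 0) an edge whose endpoints lie on the same boundary circle
keeps `Γ(ρ)` connected. -/
lemma gammaConn_resolve_false (ρ : Fin (2 * n) → Option Bool) (hρ : Γ.EdgeConst ρ)
    (e : Fin (2 * n)) (he : ρ e = none)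
    (hr : Reach (Γ.bPerm (Γ.Hset ρ)) e (Γ.σ1 e))
    (hc : Γ.GammaConn ρ) : Γ.GammaConn (Γ.resolveEdge ρ e false) := by
  set ρ0 := Γ.resolveEdge ρ e false with hρ0
  have hEC0 : Γ.EdgeConst ρ0 := Γ.edgeConst_resolve ρ hρ e false
  have hH : Γ.Hset ρ0 = Γ.Hset ρ := Γ.hset_resolve_false ρ hρ e he
  have key : Relation.EqvGen (Γ.GRel ρ0) e (Γ.σ1 e) := by
    have hr0 : Reach (Γ.bPerm (Γ.Hset ρ0)) e (Γ.σ1 e) := by rw [hH]; exact hr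
    exact Γ.eqvGen_of_reach_bPerm ρ0 hEC0 hr0
  intro i j
  refine eqvGen_mono' ?_ (hc i j)
  intro x y hxy
  rcases hxy with h | ⟨hx, hy⟩
  · exact .rel _ _ (Or.inl (by rw [hH]; exact h))
  · by_cases h1 : x = e
    · subst h1; subst hy; exact key
    · by_cases h2 : x = Γ.σ1 e
      · subst h2; subst hy
        rw [Γ.sigma1_sigma1]
        exact .symm _ _ key
      · refine .rel _ _ (Or.inr ⟨?_, hy⟩)
        rw [hρ0, Γ.resolveEdge_apply_of_ne ρ e false x h1 h2]
        exact hx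

/-- Resolving (to 1) an edge whose endpoints lie on different boundary circles
keeps `Γ(ρ)` connected. -/
lemma gammaConn_resolve_true (ρ : Fin (2 * n) → Option Bool) (hρ : Γ.EdgeConst ρ)
    (e : Fin (2 * n)) (he : ρ e = none)
    (hnr : ¬ Reach (Γ.bPerm (Γ.Hset ρ)) e (Γ.σ1 e))
    (hc : Γ.GammaConn ρ) : Γ.GammaConn (Γ.resolveEdge ρ e true) := by
  set ρ1 := Γ.resolveEdge ρ e true with hρ1
  have hEC1 : Γ.EdgeConst ρ1 := Γ.edgeConst_resolve ρ hρ e true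
  have hH : Γ.Hset ρ1 = Γ.Hset ρ ∪ {e, Γ.σ1 e} := Γ.hset_resolve_true ρ hρ e he
  have heH : e ∉ Γ.Hset ρ := by rw [Γ.mem_hset, he]; simp
  have hsH : Γ.σ1 e ∉ Γ.Hset ρ := by rw [Γ.mem_hset, hρ e, he]; simp
  have hg : Γ.bPerm (Γ.Hset ρ1) = Γ.bPerm (Γ.Hset ρ) * Equiv.swap e (Γ.σ1 e) := by
    rw [hH]
    exact Γ.bPerm_union_pair (Γ.Hset ρ) (Γ.hset_closed ρ hρ) e heH hsH
  have key : Relation.EqvGen (Γ.GRel ρ1) e (Γ.σ1 e) := by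
    have hr1 : Reach (Γ.bPerm (Γ.Hset ρ1)) e (Γ.σ1 e) := by
      rw [hg]
      exact reach_g_a_b_of_not_reach hnr
    exact Γ.eqvGen_of_reach_bPerm ρ1 hEC1 hr1
  have bstep : ∀ x : Fin (2 * n),
      Relation.EqvGen (Γ.GRel ρ1) x (Γ.bdryMap (Γ.Hset ρ) x) := by
    intro x
    have hfx : ∀ z, Γ.bdryMap (Γ.Hset ρ) z = (Γ.bPerm (Γ.Hset ρ)) z :=
      fun z => (congrFun (Γ.bPerm_eq _ (Γ.hset_closed ρ hρ)) z).symm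
    by_cases h1 : x = e
    · rw [h1]
      have h2 : (Γ.bPerm (Γ.Hset ρ)) e = (Γ.bPerm (Γ.Hset ρ1)) (Γ.σ1 e) := by
        rw [hg, Equiv.Perm.mul_apply, swap_apply_right]
      have step : Relation.EqvGen (Γ.GRel ρ1) (Γ.σ1 e) (Γ.bdryMap (Γ.Hset ρ) e) := by
        refine .rel _ _ (Or.inl ?_)
        rw [hfx e, h2, Γ.bPerm_eq _ (Γ.hset_closed ρ1 hEC1)]
      exact .trans _ _ _ key step
    · by_cases h2 : x = Γ.σ1 e
      · rw [h2]
        have h3 : (Γ.bPerm (Γ.Hset ρ)) (Γ.σ1 e) = (Γ.bPerm (Γ.Hset ρ1)) e := by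
          rw [hg, Equiv.Perm.mul_apply, swap_apply_left]
        have step : Relation.EqvGen (Γ.GRel ρ1) e (Γ.bdryMap (Γ.Hset ρ) (Γ.σ1 e)) := by
          refine .rel _ _ (Or.inl ?_)
          rw [hfx (Γ.σ1 e), h3, Γ.bPerm_eq _ (Γ.hset_closed ρ1 hEC1)]
        exact .trans _ _ _ (.symm _ _ key) step
      · refine .rel _ _ (Or.inl ?_)
        rw [hfx x, show (Γ.bPerm (Γ.Hset ρ)) x = (Γ.bPerm (Γ.Hset ρ1)) x by
          rw [hg, Equiv.Perm.mul_apply, swap_apply_of_ne_of_ne h1 h2],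
          Γ.bPerm_eq _ (Γ.hset_closed ρ1 hEC1)]
  intro i j
  refine eqvGen_mono' ?_ (hc i j)
  intro x y hxy
  rcases hxy with h | ⟨hx, hy⟩
  · rw [h]; exact bstep x
  · by_cases h1 : x = e
    · subst h1; subst hy; exact key
    · by_cases h2 : x = Γ.σ1 e
      · subst h2; subst hy
        rw [Γ.sigma1_sigma1]
        exact .symm _ _ key
      · refine .rel _ _ (Or.inr ⟨?_, hy⟩)
        rw [hρ1, Γ.resolveEdge_apply_of_ne ρ e true x h1 h2]
        exact hx

lemma nat_card_le_one {β : Type*} [Finite β] (h : Subsingleton β) : Nat.card β ≤ 1 := by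
  rcases isEmpty_or_nonempty β with hb | hb
  · simp [Nat.card_of_isEmpty]
  · exact le_of_eq (Nat.card_eq_one_iff_unique.2 ⟨h, hb⟩)

lemma faces_le_one_of_all_resolved (ρ : Fin (2 * n) → Option Bool)
    (hall : ∀ i, ρ i ≠ none) (hc : Γ.GammaConn ρ) : Γ.faces (Γ.Hset ρ) ≤ 1 := by
  have hfin : Finite (Quot (fun x y : Fin (2 * n) => y = Γ.bdryMap (Γ.Hset ρ) x)) :=
    Finite.of_surjective _ Quot.mk_surjective
  have hsub : Subsingleton (Quot (fun x y : Fin (2 * n) => y = Γ.bdryMap (Γ.Hset ρ) x)) := by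
    constructor
    intro u v
    induction u using Quot.ind with | _ x => ?_
    induction v using Quot.ind with | _ y => ?_
    refine Quot.eq.2 (eqvGen_mono' ?_ (hc x y))
    intro u v huv
    rcases huv with h | ⟨h, _⟩
    · exact .rel _ _ h
    · exact absurd h (hall u)
  exact nat_card_le_one hsub

lemma exists_good_U (N : ℕ) : ∀ (ρ : Fin (2 * n) → Option Bool),
    (Finset.univ.filter (fun i => ρ i = none)).card ≤ N →
    Γ.EdgeConst ρ → Γ.GammaConn ρ →
    ∃ U : Finset (Fin (2 * n)), (∀ i ∈ U, ρ i = none) ∧ (∀ i ∈ U, Γ.σ1 i ∈ U) ∧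
      Γ.faces (Γ.Hset ρ ∪ U) ≤ 1 := by
  classical
  induction N with
  | zero =>
    intro ρ hcard hρ hc
    refine ⟨∅, by simp, by simp, ?_⟩
    rw [Finset.union_empty]
    refine Γ.faces_le_one_of_all_resolved ρ ?_ hc
    intro i hi
    have : i ∈ Finset.univ.filter (fun i => ρ i = none) := by simp [hi]
    rw [Nat.le_zero.1 hcard |> Finset.card_eq_zero.1] at this
    exact absurd this (Finset.notMem_empty i)
  | succ N ih =>
    intro ρ hcard hρ hc
    by_cases hnone : ∃ i, ρ i = none
    · obtain ⟨e, he⟩ := hnone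
      have hmeme : e ∈ Finset.univ.filter (fun i => ρ i = none) := by simp [he]
      have hcard' : ∀ b : Bool,
          (Finset.univ.filter (fun i => Γ.resolveEdge ρ e b i = none)).card ≤ N := by
        intro b
        have hsub : Finset.univ.filter (fun i => Γ.resolveEdge ρ e b i = none) ⊆
            (Finset.univ.filter (fun i => ρ i = none)).erase e := by
          intro i hi
          simp only [Finset.mem_filter, Finset.mem_univ, true_and] at hi
          obtain ⟨h1, h2, h3⟩ := Γ.resolveEdge_none_imp ρ e b i hi
          simp [Finset.mem_erase, h1, h2]
        calc (Finset.univ.filter (fun i => Γ.resolveEdge ρ e b i = none)).card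
            ≤ ((Finset.univ.filter (fun i => ρ i = none)).erase e).card :=
              Finset.card_le_card hsub
          _ = (Finset.univ.filter (fun i => ρ i = none)).card - 1 :=
              Finset.card_erase_of_mem hmeme
          _ ≤ N := by omega
      by_cases hr : Reach (Γ.bPerm (Γ.Hset ρ)) e (Γ.σ1 e)
      · -- same boundary circle: resolve to 0
        set ρ0 := Γ.resolveEdge ρ e false with hρ0
        have hc0 : Γ.GammaConn ρ0 := Γ.gammaConn_resolve_false ρ hρ e he hr hc
        obtain ⟨U, hU1, hU2, hU3⟩ := ih ρ0 (hcard' false) (Γ.edgeConst_resolve ρ hρ e false) hc0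
        rw [Γ.hset_resolve_false ρ hρ e he] at hU3
        exact ⟨U, fun i hi => (Γ.resolveEdge_none_imp ρ e false i (hU1 i hi)).1, hU2, hU3⟩
      · -- different circles: resolve to 1
        set ρ1 := Γ.resolveEdge ρ e true with hρ1
        have hc1 : Γ.GammaConn ρ1 := Γ.gammaConn_resolve_true ρ hρ e he hr hc
        obtain ⟨U, hU1, hU2, hU3⟩ := ih ρ1 (hcard' true) (Γ.edgeConst_resolve ρ hρ e true) hc1
        rw [Γ.hset_resolve_true ρ hρ e he] at hU3
        refine ⟨U ∪ {e, Γ.σ1 e}, ?_, ?_, ?_⟩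
        · intro i hi
          rw [Finset.mem_union] at hi
          rcases hi with hi | hi
          · exact (Γ.resolveEdge_none_imp ρ e true i (hU1 i hi)).1
          · simp only [Finset.mem_insert, Finset.mem_singleton] at hi
            rcases hi with rfl | rfl
            · exact he
            · rw [hρ e]; exact he
        · intro i hi
          rw [Finset.mem_union] at hi ⊢
          rcases hi with hi | hi
          · exact Or.inl (hU2 i hi)
          · simp only [Finset.mem_insert, Finset.mem_singleton] at hi
            rcases hi with rfl | rfl
            · simp
            · simp [Γ.sigma1_sigma1]
        · have heq : Γ.Hset ρ ∪ (U ∪ {e, Γ.σ1 e}) = Γ.Hset ρ ∪ {e, Γ.σ1 e} ∪ U := by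
            ext x
            simp only [Finset.mem_union]
            tauto
          rw [heq]
          exact hU3
    · push_neg at hnone
      refine ⟨∅, by simp, by simp, ?_⟩
      rw [Finset.union_empty]
      exact Γ.faces_le_one_of_all_resolved ρ hnone hc

lemma not_split_of_gammaConn (ρ : Fin (2 * n) → Option Bool) (hρ : Γ.EdgeConst ρ)
    (hc : Γ.GammaConn ρ) : ¬ Γ.Split ρ := by
  obtain ⟨U, h1, h2, h3⟩ := Γ.exists_good_U _ ρ le_rfl hρ hc
  intro hs
  have := hs U h1 h2
  omega

end RibbonGraph

end GraphAux2

/-- Let `ρ` be a non-split partial resolution and `e` an unresolved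
edge.  Then `e` is nugatory iff `Γ₀(ρ,e)` or `Γ₁(ρ,e)` is disconnected; if
`Γ₀(ρ,e)` is disconnected then `|γ_ρ₁| = |γ_ρ| - 1` and `|γ_ρ₀| = |γ_ρ|`, while if
`Γ₁(ρ,e)` is disconnected then `|γ_ρ₀| = |γ_ρ|` and `|γ_ρ₁| = |γ_ρ| + 1`. -/
theorem stmt13 {n : ℕ} (Γ : RibbonGraph n) (hΓ : Γ.Connected)
    (ρ : Fin (2 * n) → Option Bool) (hρ : Γ.EdgeConst ρ)
    (hns : ¬ Γ.Split ρ) (e : Fin (2 * n)) (he : ρ e = none) :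
    (Γ.Nugatory ρ e ↔
      (¬ Γ.GammaConn (Γ.resolveEdge ρ e false) ∨ ¬ Γ.GammaConn (Γ.resolveEdge ρ e true))) ∧
    (¬ Γ.GammaConn (Γ.resolveEdge ρ e false) →
      Γ.faces (Γ.Hset (Γ.resolveEdge ρ e true)) + 1 = Γ.faces (Γ.Hset ρ) ∧
      Γ.faces (Γ.Hset (Γ.resolveEdge ρ e false)) = Γ.faces (Γ.Hset ρ)) ∧
    (¬ Γ.GammaConn (Γ.resolveEdge ρ e true) →
      Γ.faces (Γ.Hset (Γ.resolveEdge ρ e false)) = Γ.faces (Γ.Hset ρ) ∧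
      Γ.faces (Γ.Hset (Γ.resolveEdge ρ e true)) = Γ.faces (Γ.Hset ρ) + 1) := by
  classical
  have hcl : Γ.Closed (Γ.Hset ρ) := Γ.hset_closed ρ hρ
  have hconn : Γ.GammaConn ρ := Γ.gammaConn_of_not_split ρ hρ hns
  have hEC0 : Γ.EdgeConst (Γ.resolveEdge ρ e false) := Γ.edgeConst_resolve ρ hρ e false
  have hEC1 : Γ.EdgeConst (Γ.resolveEdge ρ e true) := Γ.edgeConst_resolve ρ hρ e true
  have hH0 : Γ.Hset (Γ.resolveEdge ρ e false) = Γ.Hset ρ := Γ.hset_resolve_false ρ hρ e he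
  have hH1 : Γ.Hset (Γ.resolveEdge ρ e true) = Γ.Hset ρ ∪ {e, Γ.σ1 e} :=
    Γ.hset_resolve_true ρ hρ e he
  have hne : e ≠ Γ.σ1 e := fun h => Γ.fixfree e h.symm
  have hf0 : Γ.faces (Γ.Hset (Γ.resolveEdge ρ e false)) = Γ.faces (Γ.Hset ρ) := by rw [hH0]
  have heH : e ∉ Γ.Hset ρ := by rw [Γ.mem_hset, he]; simp
  have hsH : Γ.σ1 e ∉ Γ.Hset ρ := by rw [Γ.mem_hset, hρ e, he]; simp
  have hgperm : Γ.bPerm (Γ.Hset (Γ.resolveEdge ρ e true)) =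
      Γ.bPerm (Γ.Hset ρ) * Equiv.swap e (Γ.σ1 e) := by
    rw [hH1]
    exact Γ.bPerm_union_pair (Γ.Hset ρ) hcl e heH hsH
  have hf1 : Γ.faces (Γ.Hset (Γ.resolveEdge ρ e true)) =
      orbCountOf ⇑(Γ.bPerm (Γ.Hset ρ) * Equiv.swap e (Γ.σ1 e)) := by
    rw [Γ.faces_eq _ (Γ.hset_closed _ hEC1), hgperm]
  have hfρ : Γ.faces (Γ.Hset ρ) = orbCountOf ⇑(Γ.bPerm (Γ.Hset ρ)) := Γ.faces_eq _ hcl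
  by_cases hr : Stmt13Aux.Reach (Γ.bPerm (Γ.Hset ρ)) e (Γ.σ1 e)
  · -- e and σ1 e on the same boundary circle: resolving to 0 keeps connectivity,
    -- resolving to 1 splits the circle.
    have hc0 : Γ.GammaConn (Γ.resolveEdge ρ e false) :=
      Γ.gammaConn_resolve_false ρ hρ e he hr hconn
    have hcount : Γ.faces (Γ.Hset (Γ.resolveEdge ρ e true)) = Γ.faces (Γ.Hset ρ) + 1 := by
      rw [hf1, hfρ]
      exact Stmt13Aux.orbCount_split hne hr
    refine ⟨⟨?_, ?_⟩, ?_, ?_⟩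
    · rintro (h0 | h1)
      · exact absurd h0 (Γ.not_split_of_gammaConn _ hEC0 hc0)
      · exact Or.inr (fun hc1 => (Γ.not_split_of_gammaConn _ hEC1 hc1) h1)
    · rintro (h0 | h1)
      · exact absurd hc0 h0
      · refine Or.inr ?_
        by_contra hs
        exact h1 (Γ.gammaConn_of_not_split _ hEC1 hs)
    · intro h0
      exact absurd hc0 h0
    · intro _
      exact ⟨hf0, hcount⟩
  · -- different boundary circles: resolving to 1 keeps connectivity,
    -- resolving to 1 merges two circles.
    have hc1 : Γ.GammaConn (Γ.resolveEdge ρ e true) :=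
      Γ.gammaConn_resolve_true ρ hρ e he hr hconn
    have hcount : Γ.faces (Γ.Hset (Γ.resolveEdge ρ e true)) + 1 = Γ.faces (Γ.Hset ρ) := by
      rw [hf1, hfρ]
      exact Stmt13Aux.orbCount_merge hne hr
    refine ⟨⟨?_, ?_⟩, ?_, ?_⟩
    · rintro (h0 | h1)
      · exact Or.inl (fun hc0 => (Γ.not_split_of_gammaConn _ hEC0 hc0) h0)
      · exact absurd h1 (Γ.not_split_of_gammaConn _ hEC1 hc1)
    · rintro (h0 | h1)
      · refine Or.inl ?_
        by_contra hs
        exact h0 (Γ.gammaConn_of_not_split _ hEC0 hs)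
      · exact absurd hc1 h1
    · intro _
      exact ⟨hcount, hf0⟩
    · intro h1
      exact absurd hc1 h1
end

section
/- Let Q be a quasi-tree of a connected ribbon graph Γ, parametrized by the chord diagram C_Q, and let e be an edge of Γ − Q whose chord in C_Q crosses no other chord. Then adding e to any spanning subgraph H with Q-dead edge set containing the component structure of D(Q) does not change the number of components: k(D(Q) ∪ {e}) = k(D(Q)), and f(D(Q) ∪ {e}) = f(D(Q)) + 1. -/
open Equiv

namespace Stmt17Aux

variable {α : Type*}

/-- same-orbit (forward reachability) relation. -/
def SO (f : α → α) (x y : α) : Prop := ∃ m : ℕ, f^[m] x = y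

lemma SO.refl (f : α → α) (x : α) : SO f x x := ⟨0, rfl⟩

lemma SO.trans {f : α → α} {x y z : α} (h : SO f x y) (h' : SO f y z) : SO f x z := by
  obtain ⟨m, rfl⟩ := h
  obtain ⟨k, rfl⟩ := h'
  exact ⟨k + m, (Function.iterate_add_apply f k m x)⟩

lemma SO.step (f : α → α) (x : α) : SO f x (f x) := ⟨1, rfl⟩

lemma per_pos [Finite α] {f : α → α} (hf : Function.Injective f) (x : α) :
    0 < Function.minimalPeriod f x := by
  obtain ⟨i, j, hne, hij⟩ := Finite.exists_ne_map_eq_of_infinite (fun m : ℕ => f^[m] x)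
  wlog hlt : i < j generalizing i j
  · exact this j i hne.symm hij.symm (by omega)
  have hkey : f^[j - i] x = x := by
    have : f^[i] (f^[j - i] x) = f^[i] x := by
      rw [← Function.iterate_add_apply]
      rw [show i + (j - i) = j by omega]
      exact hij.symm
    exact (hf.iterate i) this
  exact Function.minimalPeriod_pos_of_mem_periodicPts ⟨j - i, by omega, hkey⟩

lemma idx_unique {f : α → α} (hf : Function.Injective f) {x : α} {i j : ℕ}
    (hi : i < Function.minimalPeriod f x) (hj : j < Function.minimalPeriod f x)
    (h : f^[i] x = f^[j] x) : i = j := by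
  wlog hle : i ≤ j generalizing i j
  · exact (this hj hi h.symm (by omega)).symm
  have hkey : f^[j - i] x = x := by
    have : f^[i] (f^[j - i] x) = f^[i] x := by
      rw [← Function.iterate_add_apply, show i + (j - i) = j by omega]
      exact h.symm
    exact (hf.iterate i) this
  have := Function.IsPeriodicPt.eq_zero_of_lt_minimalPeriod hkey (by omega)
  omega

lemma SO.symm [Finite α] {f : α → α} (hf : Function.Injective f) {x y : α}
    (h : SO f x y) : SO f y x := by
  obtain ⟨m, rfl⟩ := h
  set L := Function.minimalPeriod f x with hL
  have hLpos : 0 < L := per_pos hf x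
  refine ⟨L - m % L, ?_⟩
  rw [← Function.iterate_add_apply]
  have hdm := Nat.div_add_mod m L
  have hexp : L * (m / L + 1) = L * (m / L) + L := by ring
  have : L - m % L + m = L * (m / L + 1) := by
    have : m % L < L := Nat.mod_lt _ hLpos
    omega
  rw [this]
  -- f^[L * k] x = x
  have : ∀ k : ℕ, f^[L * k] x = x := by
    intro k
    induction k with
    | zero => simp
    | succ k ih =>
      rw [Nat.mul_succ, Function.iterate_add_apply, Function.iterate_minimalPeriod, ih]
  exact this _

lemma SO.equivalence [Finite α] {f : α → α} (hf : Function.Injective f) :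
    Equivalence (SO f) :=
  ⟨SO.refl f, fun h => h.symm hf, fun h h' => h.trans h'⟩

lemma eqvGen_to_quot {r : α → α → Prop} {x y : α} (h : Relation.EqvGen r x y) :
    Quot.mk r x = Quot.mk r y := Quot.eqvGen_sound h

/-- `Quot r` and `Quot r'` have equal cardinality if the relations generate the
same equivalence. -/
lemma card_quot_congr {r r' : α → α → Prop}
    (h : ∀ x y, r x y → Relation.EqvGen r' x y)
    (h' : ∀ x y, r' x y → Relation.EqvGen r x y) :
    Nat.card (Quot r) = Nat.card (Quot r') := by
  refine Nat.card_congr ⟨Quot.lift (Quot.mk r') (fun x y hxy => Quot.eqvGen_sound (h x y hxy)),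
    Quot.lift (Quot.mk r) (fun x y hxy => Quot.eqvGen_sound (h' x y hxy)), ?_, ?_⟩
  · intro q; induction q using Quot.ind; rfl
  · intro q; induction q using Quot.ind; rfl

lemma eqvGen_iterate {f : α → α} (x : α) (m : ℕ) :
    Relation.EqvGen (fun i j : α => j = f i) x (f^[m] x) := by
  induction m with
  | zero => exact Relation.EqvGen.refl x
  | succ m ih =>
    refine Relation.EqvGen.trans _ _ _ ih (Relation.EqvGen.rel _ _ ?_)
    exact Function.iterate_succ_apply' f m x

/-- orbit count equals the number of `SO`-classes. -/
lemma orbCount_eq_card_SO [Finite α] {f : α → α} (hf : Function.Injective f) :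
    orbCountOf f = Nat.card (Quot (SO f)) := by
  refine card_quot_congr (fun x y h => Relation.EqvGen.rel _ _ ⟨1, h.symm⟩) ?_
  intro x y h
  obtain ⟨m, rfl⟩ := h
  exact eqvGen_iterate x m

lemma quot_mk_SO_eq_iff [Finite α] {f : α → α} (hf : Function.Injective f) {x y : α} :
    Quot.mk (SO f) x = Quot.mk (SO f) y ↔ SO f x y :=
  ⟨fun h => ((SO.equivalence hf).eqvGen_iff).mp (Quot.eqvGen_exact h), fun h => Quot.sound h⟩


/-- Characterization of `ReachesBefore` from `a` via indices along the cycle of `a`. -/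
lemma RB_iff_idx {f : α → α} (hf : Function.Injective f) {a b x : α} {mb mx : ℕ}
    (hmbL : mb < Function.minimalPeriod f a) (hmxL : mx < Function.minimalPeriod f a)
    (hmb0 : 0 < mb) (hb : f^[mb] a = b) (hx : f^[mx] a = x) :
    ReachesBefore f a x b ↔ mx < mb := by
  constructor
  · rintro ⟨m, hm, hk⟩
    have hmlt : m < mb := by
      by_contra hcon
      exact hk mb (by omega) hb
    have h1 : f^[m % Function.minimalPeriod f a] a = x := by
      rw [Function.iterate_mod_minimalPeriod_eq]; exact hm
    have h2 : m % Function.minimalPeriod f a = mx :=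
      idx_unique hf (Nat.mod_lt _ (by omega)) hmxL (h1.trans hx.symm)
    have : m % Function.minimalPeriod f a ≤ m := Nat.mod_le _ _
    omega
  · intro hlt
    refine ⟨mx, hx, fun k hk hkb => ?_⟩
    have : k = mb := idx_unique hf (by omega) hmbL (hkb.trans hb.symm)
    omega

/-- On a single cycle, the two arcs determined by `a ≠ b` are complementary. -/
lemma RB_compl [Finite α] {f : α → α} (hf : Function.Injective f)
    {a b : α} (hcyc : ∀ x y : α, SO f x y) (hab : a ≠ b) (x : α) :
    ReachesBefore f b x a ↔ ¬ ReachesBefore f a x b := by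
  have hLpos : 0 < Function.minimalPeriod f a := per_pos hf a
  have hfLa : f^[Function.minimalPeriod f a] a = a := Function.iterate_minimalPeriod
  obtain ⟨mb, hmbL, hmb0, hb⟩ :
      ∃ mb, mb < Function.minimalPeriod f a ∧ 0 < mb ∧ f^[mb] a = b := by
    obtain ⟨m, hm⟩ := hcyc a b
    refine ⟨m % Function.minimalPeriod f a, Nat.mod_lt _ hLpos, ?_, ?_⟩
    · rcases Nat.eq_zero_or_pos (m % Function.minimalPeriod f a) with h | h
      · exfalso; apply hab
        rw [← hm, ← Function.iterate_mod_minimalPeriod_eq, h]; rfl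
      · exact h
    · rw [Function.iterate_mod_minimalPeriod_eq]; exact hm
  obtain ⟨mx, hmxL, hx⟩ : ∃ mx, mx < Function.minimalPeriod f a ∧ f^[mx] a = x := by
    obtain ⟨m, hm⟩ := hcyc a x
    exact ⟨m % Function.minimalPeriod f a, Nat.mod_lt _ hLpos,
      by rw [Function.iterate_mod_minimalPeriod_eq]; exact hm⟩
  have hia : f^[Function.minimalPeriod f a - mb] b = a := by
    rw [← hb, ← Function.iterate_add_apply,
      show Function.minimalPeriod f a - mb + mb = Function.minimalPeriod f a by omega, hfLa]
  have hLb : Function.minimalPeriod f b = Function.minimalPeriod f a := by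
    have h1 : Function.IsPeriodicPt f (Function.minimalPeriod f a) b := by
      show f^[Function.minimalPeriod f a] b = b
      rw [← hb, ← Function.iterate_add_apply, Nat.add_comm, Function.iterate_add_apply, hfLa]
    have h3 : Function.IsPeriodicPt f (Function.minimalPeriod f b) a := by
      show f^[Function.minimalPeriod f b] a = a
      rw [← hia, ← Function.iterate_add_apply, Nat.add_comm, Function.iterate_add_apply,
        Function.iterate_minimalPeriod, hia]
    exact Nat.dvd_antisymm (Function.IsPeriodicPt.minimalPeriod_dvd h1)
      (Function.IsPeriodicPt.minimalPeriod_dvd h3)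
  obtain ⟨j, hjL, hjval, hjeq⟩ :
      ∃ j, j < Function.minimalPeriod f a ∧ f^[j] b = x ∧
        (mb ≤ mx → j = mx - mb) ∧ (mx < mb → j = mx + (Function.minimalPeriod f a - mb)) := by
    rcases le_or_gt mb mx with h | h
    · refine ⟨mx - mb, by omega, ?_, fun _ => rfl, by omega⟩
      rw [← hb, ← Function.iterate_add_apply, show mx - mb + mb = mx by omega, hx]
    · refine ⟨mx + (Function.minimalPeriod f a - mb), by omega, ?_, by omega, fun _ => rfl⟩
      rw [← hb, ← Function.iterate_add_apply,
        show mx + (Function.minimalPeriod f a - mb) + mb = mx + Function.minimalPeriod f a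
          by omega, Function.iterate_add_apply, hfLa, hx]
  have hrb := RB_iff_idx hf (a := b) (b := a) (x := x)
    (mb := Function.minimalPeriod f a - mb) (mx := j)
    (by rw [hLb]; omega) (by rw [hLb]; exact hjL) (by omega) hia hjval
  have hra := RB_iff_idx hf hmbL hmxL hmb0 hb hx
  rw [hrb, hra]
  rcases le_or_gt mb mx with h | h
  · have := hjeq.1 h; omega
  · have := hjeq.2 h; omega



lemma eqvGen_r_to_SO [Finite α] {f : α → α} (hf : Function.Injective f) {x y : α}
    (h : Relation.EqvGen (fun i j : α => j = f i) x y) : SO f x y := by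
  induction h with
  | rel u v huv => exact ⟨1, by simp [huv]⟩
  | refl u => exact SO.refl f u
  | symm u v _ ih => exact ih.symm hf
  | trans u v w _ _ ih1 ih2 => exact ih1.trans ih2

/-- MAIN: if every `τ`-move stays on the same side of the chord `(a,b)` of the
single cycle of `f`, then `a` and `b` lie on a common orbit of `g = f ∘ τ`. -/
lemma main_reach [Finite α] {f g τ : α → α}
    (hf : Function.Injective f) (hg : Function.Bijective g)
    (hgf : ∀ x, g x = f (τ x)) {a b : α} (hab : a ≠ b)
    (hcyc : ∀ x, SO f a x)
    (hside : ∀ x, ReachesBefore f a x b ↔ ReachesBefore f a (τ x) b) :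
    SO g a b := by
  have hLpos : 0 < Function.minimalPeriod f a := per_pos hf a
  obtain ⟨mb, hmbL, hmb0, hb⟩ :
      ∃ mb, mb < Function.minimalPeriod f a ∧ 0 < mb ∧ f^[mb] a = b := by
    obtain ⟨m, hm⟩ := hcyc b
    refine ⟨m % Function.minimalPeriod f a, Nat.mod_lt _ hLpos, ?_, ?_⟩
    · rcases Nat.eq_zero_or_pos (m % Function.minimalPeriod f a) with h | h
      · exfalso; apply hab
        rw [← hm, ← Function.iterate_mod_minimalPeriod_eq, h]; rfl
      · exact h
    · rw [Function.iterate_mod_minimalPeriod_eq]; exact hm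
  set X : α → Prop := fun x => ∃ i, 0 < i ∧ i < mb ∧ f^[i] a = x with hX
  -- points of X (and a) satisfy ReachesBefore
  have hRB : ∀ x, (x = a ∨ X x) → ReachesBefore f a x b := by
    rintro x (rfl | ⟨i, hi0, himb, rfl⟩)
    · exact ⟨0, rfl, fun k hk hkb => by
        have : k = 0 := by omega
        subst this; exact hab hkb⟩
    · refine ⟨i, rfl, fun k hk hkb => ?_⟩
      have : k = mb := idx_unique hf (by omega) hmbL (hkb.trans hb.symm)
      omega
  -- one step
  have hstep : ∀ x, (x = a ∨ X x) → (X (g x) ∨ g x = b) := by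
    intro x hx
    have h1 : ReachesBefore f a (τ x) b := (hside x).mp (hRB x hx)
    obtain ⟨m, hm, hk⟩ := h1
    have hmlt : m < mb := by
      by_contra hcon
      exact hk mb (by omega) hb
    have hgx : g x = f^[m + 1] a := by
      rw [hgf, ← hm, ← Function.iterate_succ_apply' f m a]
    rcases Nat.lt_or_ge (m + 1) mb with h | h
    · exact Or.inl ⟨m + 1, by omega, h, hgx.symm⟩
    · right
      rw [hgx, show m + 1 = mb by omega, hb]
  -- iterate
  by_contra hcon
  have hnb : ∀ m : ℕ, g^[m] a ≠ b := by
    intro m hm; exact hcon ⟨m, hm⟩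
  have hiter : ∀ m : ℕ, 0 < m → X (g^[m] a) := by
    intro m hm
    induction m with
    | zero => omega
    | succ m ih =>
      have hprev : g^[m] a = a ∨ X (g^[m] a) := by
        rcases Nat.eq_zero_or_pos m with h | h
        · left; rw [h]; rfl
        · right; exact ih h
      have := hstep _ hprev
      rw [← Function.iterate_succ_apply' g m a] at this
      rcases this with h | h
      · exact h
      · exact absurd h (hnb (m + 1))
  have hm0pos : 0 < Function.minimalPeriod g a := per_pos hg.injective a
  have := hiter (Function.minimalPeriod g a) hm0pos
  rw [Function.iterate_minimalPeriod] at this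
  obtain ⟨i, hi0, himb, hia⟩ := this
  have : i = 0 := idx_unique hf (by omega) hLpos (by simpa using hia)
  omega

/-- Orbit counting: precomposing with the swap of two points on a common orbit
splits that orbit into two. -/
lemma split_count [Fintype α] [DecidableEq α] {f : α → α} (hf : Function.Bijective f)
    {a b : α} (hab : a ≠ b) (hso : SO f a b) :
    orbCountOf (f ∘ Equiv.swap a b) = orbCountOf f + 1 := by
  classical
  set f' : α → α := f ∘ Equiv.swap a b with hf'def
  have hf' : Function.Bijective f' := hf.comp (Equiv.swap a b).bijective
  have hsymm := fun {x y : α} (h : SO f x y) => SO.symm hf.injective h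
  have hsymm' := fun {x y : α} (h : SO f' x y) => SO.symm hf'.injective h
  -- C1 : f'-orbits refine f-orbits
  have hC1 : ∀ x y, SO f' x y → SO f x y := by
    intro x y h
    obtain ⟨m, rfl⟩ := h
    induction m with
    | zero => exact SO.refl f x
    | succ m ih =>
      refine SO.trans ih ?_
      rw [Function.iterate_succ_apply']
      obtain ⟨z, hz⟩ : ∃ z, f'^[m] x = z := ⟨_, rfl⟩
      rw [hz]
      show SO f z (f (Equiv.swap a b z))
      rcases eq_or_ne z a with rfl | hza
      · rw [Equiv.swap_apply_left]
        exact SO.trans hso (SO.step f b)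
      rcases eq_or_ne z b with rfl | hzb
      · rw [Equiv.swap_apply_right]
        exact SO.trans (hsymm hso) (SO.step f a)
      · rw [Equiv.swap_apply_of_ne_of_ne hza hzb]
        exact SO.step f z
  -- C3 : orbits not containing a are untouched
  have hC3 : ∀ x y, ¬ SO f a x → SO f x y → SO f' x y := by
    intro x y hax h
    have hne : ∀ k : ℕ, f^[k] x ≠ a ∧ f^[k] x ≠ b := by
      intro k
      constructor
      · intro hk; exact hax (hsymm ⟨k, hk⟩)
      · intro hk; exact hax (SO.trans hso (hsymm ⟨k, hk⟩))
    have hiter : ∀ k : ℕ, f'^[k] x = f^[k] x := by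
      intro k
      induction k with
      | zero => rfl
      | succ k ih =>
        rw [Function.iterate_succ_apply', Function.iterate_succ_apply', ih, hf'def,
          Function.comp_apply, Equiv.swap_apply_of_ne_of_ne (hne k).1 (hne k).2]
    obtain ⟨m, hm⟩ := h
    exact ⟨m, by rw [hiter m]; exact hm⟩
  -- C2 : the orbit of a is covered by the f'-orbits of a and b
  have hC2 : ∀ x, SO f a x → SO f' a x ∨ SO f' b x := by
    intro x h
    obtain ⟨m, rfl⟩ := h
    induction m with
    | zero => exact Or.inl (SO.refl f' a)
    | succ m ih =>
      rw [Function.iterate_succ_apply']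
      obtain ⟨z, hz⟩ : ∃ z, f^[m] a = z := ⟨_, rfl⟩
      rw [hz] at ih ⊢
      rcases eq_or_ne z a with hza | hza
      · right
        rw [hza]
        exact ⟨1, by rw [Function.iterate_one, hf'def, Function.comp_apply,
          Equiv.swap_apply_right]⟩
      rcases eq_or_ne z b with hzb | hzb
      · left
        rw [hzb]
        exact ⟨1, by rw [Function.iterate_one, hf'def, Function.comp_apply,
          Equiv.swap_apply_left]⟩
      · have hfz : f z = f' z := by
          rw [hf'def, Function.comp_apply, Equiv.swap_apply_of_ne_of_ne hza hzb]
        rcases ih with h | h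
        · left; rw [hfz]; exact SO.trans h (SO.step f' z)
        · right; rw [hfz]; exact SO.trans h (SO.step f' z)
  -- C4 : a and b are separated by f'
  have hC4 : ¬ SO f' a b := by
    have hLpos : 0 < Function.minimalPeriod f a := per_pos hf.injective a
    obtain ⟨mb, hmbL, hmb0, hb⟩ :
        ∃ mb, mb < Function.minimalPeriod f a ∧ 0 < mb ∧ f^[mb] a = b := by
      obtain ⟨m, hm⟩ := hso
      refine ⟨m % Function.minimalPeriod f a, Nat.mod_lt _ hLpos, ?_, ?_⟩
      · rcases Nat.eq_zero_or_pos (m % Function.minimalPeriod f a) with h | h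
        · exfalso; apply hab
          rw [← hm, ← Function.iterate_mod_minimalPeriod_eq, h]; rfl
        · exact h
      · rw [Function.iterate_mod_minimalPeriod_eq]; exact hm
    set P : α → Prop := fun x => x = a ∨
      ∃ i, mb < i ∧ i < Function.minimalPeriod f a ∧ f^[i] a = x with hP
    have hPa : P a := Or.inl rfl
    have hPb : ¬ P b := by
      rintro (h | ⟨i, hi1, hi2, hi3⟩)
      · exact hab h.symm
      · have : i = mb := idx_unique hf.injective hi2 hmbL (hi3.trans hb.symm)
        omega
    have hclosed : ∀ x, P x → P (f' x) := by
      rintro x (hxa | ⟨i, hi1, hi2, hi3⟩)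
      · rw [hxa]
        have : f' a = f^[mb + 1] a := by
          rw [hf'def, Function.comp_apply, Equiv.swap_apply_left, ← hb,
            ← Function.iterate_succ_apply' f mb a]
        rcases eq_or_ne (mb + 1) (Function.minimalPeriod f a) with h | h
        · left; rw [this, h, Function.iterate_minimalPeriod]
        · right; exact ⟨mb + 1, by omega, by omega, this.symm⟩
      · have hxa : x ≠ a := by
          rintro rfl
          have : i = 0 := idx_unique hf.injective hi2 hLpos (by simpa using hi3)
          omega
        have hxb : x ≠ b := by
          rintro rfl
          have : i = mb := idx_unique hf.injective hi2 hmbL (hi3.trans hb.symm)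
          omega
        have hfx : f' x = f^[i + 1] a := by
          rw [hf'def, Function.comp_apply, Equiv.swap_apply_of_ne_of_ne hxa hxb, ← hi3,
            ← Function.iterate_succ_apply' f i a]
        rcases eq_or_ne (i + 1) (Function.minimalPeriod f a) with h | h
        · left; rw [hfx, h, Function.iterate_minimalPeriod]
        · right; exact ⟨i + 1, by omega, by omega, hfx.symm⟩
    intro hcon
    obtain ⟨m, hm⟩ := hcon
    have : ∀ k : ℕ, P (f'^[k] a) := by
      intro k
      induction k with
      | zero => exact hPa
      | succ k ih =>
        rw [Function.iterate_succ_apply']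
        exact hclosed _ ih
    exact hPb (hm ▸ this m)
  -- counting
  have hcard : ∀ (g : α → α), Function.Bijective g →
      orbCountOf g = Nat.card (Quot (SO g)) := fun g hgb => orbCount_eq_card_SO hgb.injective
  rw [hcard f hf, hcard f' hf']
  have : Finite (Quot (SO f)) := Finite.of_surjective (Quot.mk _) Quot.exists_rep
  have : Finite (Quot (SO f')) := Finite.of_surjective (Quot.mk _) Quot.exists_rep
  let _ : Fintype (Quot (SO f)) := Fintype.ofFinite _
  let _ : Fintype (Quot (SO f')) := Fintype.ofFinite _
  rw [Nat.card_eq_fintype_card, Nat.card_eq_fintype_card]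
  set Φ : Quot (SO f') → Quot (SO f) :=
    Quot.lift (Quot.mk (SO f)) (fun x y h => Quot.sound (hC1 x y h)) with hΦ
  have hΦmk : ∀ x : α, Φ (Quot.mk (SO f') x) = Quot.mk (SO f) x := fun x => rfl
  have hfiber : ∀ c : Quot (SO f),
      (Finset.univ.filter (fun d => Φ d = c)).card
        = 1 + (if c = Quot.mk (SO f) a then 1 else 0) := by
    intro c
    obtain ⟨x, rfl⟩ := Quot.exists_rep c
    by_cases hax : SO f a x
    · have hc : Quot.mk (SO f) x = Quot.mk (SO f) a :=
        (quot_mk_SO_eq_iff hf.injective).mpr (hsymm hax)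
      rw [if_pos hc]
      have : (Finset.univ.filter (fun d => Φ d = Quot.mk (SO f) x))
          = {Quot.mk (SO f') a, Quot.mk (SO f') b} := by
        ext d
        simp only [Finset.mem_filter, Finset.mem_univ, true_and, Finset.mem_insert,
          Finset.mem_singleton]
        constructor
        · intro hd
          obtain ⟨y, rfl⟩ := Quot.exists_rep d
          rw [hΦmk] at hd
          have hxy : SO f a y := by
            have := (quot_mk_SO_eq_iff hf.injective).mp hd
            exact SO.trans hax (hsymm this)
          rcases hC2 y hxy with h | h
          · left; exact ((quot_mk_SO_eq_iff hf'.injective).mpr h).symm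
          · right; exact ((quot_mk_SO_eq_iff hf'.injective).mpr h).symm
        · rintro (rfl | rfl)
          · rw [hΦmk]
            exact (quot_mk_SO_eq_iff hf.injective).mpr hax
          · rw [hΦmk]
            exact (quot_mk_SO_eq_iff hf.injective).mpr (SO.trans (hsymm hso) hax)
      rw [this]
      rw [Finset.card_insert_of_notMem, Finset.card_singleton]
      rw [Finset.mem_singleton]
      intro h
      exact hC4 ((quot_mk_SO_eq_iff hf'.injective).mp h)
    · have hc : ¬ (Quot.mk (SO f) x = Quot.mk (SO f) a) := by
        intro h
        exact hax (hsymm ((quot_mk_SO_eq_iff hf.injective).mp h))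
      rw [if_neg hc]
      have : (Finset.univ.filter (fun d => Φ d = Quot.mk (SO f) x))
          = {Quot.mk (SO f') x} := by
        ext d
        simp only [Finset.mem_filter, Finset.mem_univ, true_and, Finset.mem_singleton]
        constructor
        · intro hd
          obtain ⟨y, rfl⟩ := Quot.exists_rep d
          rw [hΦmk] at hd
          have hxy : SO f x y := hsymm ((quot_mk_SO_eq_iff hf.injective).mp hd)
          exact ((quot_mk_SO_eq_iff hf'.injective).mpr (hC3 x y hax hxy)).symm
        · rintro rfl
          rw [hΦmk]
      rw [this, Finset.card_singleton]
  have hsum : (Finset.univ : Finset (Quot (SO f'))).card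
      = ∑ c : Quot (SO f), (Finset.univ.filter (fun d => Φ d = c)).card :=
    Finset.card_eq_sum_card_fiberwise (fun x _ => Finset.mem_univ (Φ x))
  rw [Fintype.card, Fintype.card, hsum]
  rw [Finset.sum_congr rfl (fun c _ => hfiber c)]
  rw [Finset.sum_add_distrib, Finset.sum_const, Finset.sum_ite_eq']
  simp [Finset.card_univ]

end Stmt17Aux

namespace Stmt17Aux

variable {n : ℕ}

lemma sig1_invol (Γ : RibbonGraph n) (i : Fin (2 * n)) : Γ.σ1 (Γ.σ1 i) = i := by
  have := congrFun (congrArg (fun p : Equiv.Perm (Fin (2 * n)) => (p : Fin (2 * n) → Fin (2 * n)))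
    Γ.invol) i
  simpa [Equiv.Perm.mul_apply] using this

lemma edgeOrd_sig1 (Γ : RibbonGraph n) (i : Fin (2 * n)) :
    Γ.edgeOrd (Γ.σ1 i) = Γ.edgeOrd i := by
  unfold RibbonGraph.edgeOrd
  rw [sig1_invol]
  exact min_comm _ _

lemma pair_of_edgeOrd_eq (Γ : RibbonGraph n) {i j : Fin (2 * n)}
    (h : Γ.edgeOrd j = Γ.edgeOrd i) : j = i ∨ j = Γ.σ1 i := by
  unfold RibbonGraph.edgeOrd at h
  rcases min_choice (j : ℕ) ((Γ.σ1 j : Fin (2 * n)) : ℕ) with h1 | h1 <;>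
    rcases min_choice (i : ℕ) ((Γ.σ1 i : Fin (2 * n)) : ℕ) with h2 | h2 <;>
      rw [h1, h2] at h
  · exact Or.inl (Fin.ext h)
  · exact Or.inr (Fin.ext h)
  · right
    have h3 : Γ.σ1 j = i := Fin.ext h
    rw [← h3, sig1_invol]
  · left
    have h3 : Γ.σ1 j = Γ.σ1 i := Fin.ext h
    have h4 := congrArg Γ.σ1 h3
    rwa [sig1_invol, sig1_invol] at h4

lemma closed_notMem (Γ : RibbonGraph n) {B : Finset (Fin (2 * n))} (hB : Γ.Closed B)
    {i : Fin (2 * n)} (hi : i ∉ B) : Γ.σ1 i ∉ B := by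
  intro h
  exact hi (by simpa [sig1_invol] using hB _ h)

lemma bdry_bij (Γ : RibbonGraph n) {B : Finset (Fin (2 * n))} (hB : Γ.Closed B) :
    Function.Bijective (Γ.bdryMap B) := by
  have hform : Γ.bdryMap B = fun i => Γ.σ0 (if i ∈ B then Γ.σ1 i else i) := by
    funext i
    unfold RibbonGraph.bdryMap
    split <;> rfl
  have hinv : Function.Involutive (fun i : Fin (2 * n) => if i ∈ B then Γ.σ1 i else i) := by
    intro i
    by_cases h : i ∈ B
    · simp only [h, if_true, hB i h, if_pos, sig1_invol]
    · simp only [h, if_false]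
  rw [hform]
  exact Γ.σ0.bijective.comp hinv.bijective

end Stmt17Aux

/-- If `e` is an edge of `Γ - A` whose chord in `C_A` crosses no other
chord, then adding `e` to the internally dead subgraph `D(A)` preserves the number of
components and increases the number of faces by one. -/
theorem stmt17 {n : ℕ} (Γ : RibbonGraph n) (hΓ : Γ.Connected)
    (A : Finset (Fin (2 * n))) (hA : Γ.IsQuasiTree A)
    (e : Fin (2 * n)) (he : e ∉ A)
    (hcross : ∀ j, Γ.edgeOrd j ≠ Γ.edgeOrd e → ¬ Γ.Crosses A e j) :
    Γ.kComp (Γ.deadIn A ∪ {e, Γ.σ1 e}) = Γ.kComp (Γ.deadIn A) ∧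
    Γ.faces (Γ.deadIn A ∪ {e, Γ.σ1 e}) = Γ.faces (Γ.deadIn A) + 1 := by
  classical
  obtain ⟨hAcl, hAk, hAf⟩ := hA
  have hfbij : Function.Bijective (Γ.bdryMap A) := Stmt17Aux.bdry_bij Γ hAcl
  -- the boundary of A is a single cycle
  have hcycA : ∀ x y : Fin (2 * n), Stmt17Aux.SO (Γ.bdryMap A) x y := by
    have h1 : orbCountOf (Γ.bdryMap A) = 1 := hAf
    have hsub : Subsingleton (Quot (fun i j : Fin (2 * n) => j = Γ.bdryMap A i)) :=
      (Nat.card_eq_one_iff_unique.mp h1).1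
    intro x y
    have hq : Quot.mk (fun i j : Fin (2 * n) => j = Γ.bdryMap A i) x
        = Quot.mk (fun i j : Fin (2 * n) => j = Γ.bdryMap A i) y := Subsingleton.elim _ _
    exact Stmt17Aux.eqvGen_r_to_SO hfbij.injective (Quot.eqvGen_exact hq)
  have hne : ∀ i : Fin (2 * n), i ≠ Γ.σ1 i := fun i h => Γ.fixfree i h.symm
  have hsig1e : Γ.σ1 e ∉ A := Stmt17Aux.closed_notMem Γ hAcl he
  -- complementarity of the two arcs of any chord
  have hRBc : ∀ i x : Fin (2 * n),
      ReachesBefore (Γ.bdryMap A) (Γ.σ1 i) x i ↔ ¬ ReachesBefore (Γ.bdryMap A) i x (Γ.σ1 i) :=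
    fun i x => Stmt17Aux.RB_compl hfbij.injective hcycA (hne i) x
  -- liveness is symmetric on the two half-edges of an edge
  have hlive : ∀ i, Γ.Live A i → Γ.Live A (Γ.σ1 i) := by
    intro i hi j hj
    rw [Stmt17Aux.edgeOrd_sig1] at hj
    have hnc := hi j hj
    unfold RibbonGraph.Crosses ChordsCross at hnc ⊢
    rw [Stmt17Aux.sig1_invol, hRBc i j, hRBc i (Γ.σ1 j)]
    tauto
  -- the internally dead subgraph is closed
  have hDcl : Γ.Closed (Γ.deadIn A) := by
    intro i hi
    simp only [RibbonGraph.deadIn, Finset.mem_filter] at hi ⊢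
    refine ⟨hAcl i hi.1, fun hlv => hi.2 ?_⟩
    have := hlive _ hlv
    rwa [Stmt17Aux.sig1_invol] at this
  have hDsub : Γ.deadIn A ⊆ A := Finset.filter_subset _ _
  have hgbij : Function.Bijective (Γ.bdryMap (Γ.deadIn A)) := Stmt17Aux.bdry_bij Γ hDcl
  have heD : e ∉ Γ.deadIn A := fun h => he (hDsub h)
  have hsig1eD : Γ.σ1 e ∉ Γ.deadIn A := fun h => hsig1e (hDsub h)
  -- the toggling map
  set τ : Fin (2 * n) → Fin (2 * n) :=
    fun x => if x ∈ A ∧ x ∉ Γ.deadIn A then Γ.σ1 x else x with hτdef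
  have hgf : ∀ x, Γ.bdryMap (Γ.deadIn A) x = Γ.bdryMap A (τ x) := by
    intro x
    by_cases hxD : x ∈ Γ.deadIn A
    · have hxA : x ∈ A := hDsub hxD
      have : τ x = x := by simp [hτdef, hxD]
      rw [this]
      unfold RibbonGraph.bdryMap
      rw [if_pos hxD, if_pos hxA]
    · by_cases hxA : x ∈ A
      · have : τ x = Γ.σ1 x := by simp [hτdef, hxD, hxA]
        rw [this]
        unfold RibbonGraph.bdryMap
        rw [if_neg hxD, if_pos (hAcl x hxA), Stmt17Aux.sig1_invol]
      · have : τ x = x := by simp [hτdef, hxA]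
        rw [this]
        unfold RibbonGraph.bdryMap
        rw [if_neg hxD, if_neg hxA]
  have hside : ∀ x, ReachesBefore (Γ.bdryMap A) e x (Γ.σ1 e)
      ↔ ReachesBefore (Γ.bdryMap A) e (τ x) (Γ.σ1 e) := by
    intro x
    by_cases hx : x ∈ A ∧ x ∉ Γ.deadIn A
    · have hτx : τ x = Γ.σ1 x := by simp [hτdef, hx.1, hx.2]
      rw [hτx]
      have hord : Γ.edgeOrd x ≠ Γ.edgeOrd e := by
        intro h
        rcases Stmt17Aux.pair_of_edgeOrd_eq Γ h with rfl | rfl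
        · exact he hx.1
        · exact hsig1e hx.1
      have := hcross x hord
      unfold RibbonGraph.Crosses ChordsCross at this
      exact not_not.mp this
    · have hτx : τ x = x := by simp [hτdef]; tauto
      rw [hτx]
  -- the key reachability result
  have hkey : Stmt17Aux.SO (Γ.bdryMap (Γ.deadIn A)) e (Γ.σ1 e) :=
    Stmt17Aux.main_reach hfbij.injective hgbij hgf (hne e) (fun x => hcycA e x) hside
  -- e and σ1 e are connected in D
  have hSOg_eqv : ∀ x y, Stmt17Aux.SO (Γ.bdryMap (Γ.deadIn A)) x y →
      Relation.EqvGen (Γ.compRel (Γ.deadIn A)) x y := by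
    rintro x y ⟨m, rfl⟩
    induction m with
    | zero => exact Relation.EqvGen.refl x
    | succ m ih =>
      refine Relation.EqvGen.trans _ _ _ ih ?_
      rw [Function.iterate_succ_apply']
      obtain ⟨z, hz⟩ : ∃ z, (Γ.bdryMap (Γ.deadIn A))^[m] x = z := ⟨_, rfl⟩
      rw [hz]
      by_cases hzD : z ∈ Γ.deadIn A
      · refine Relation.EqvGen.trans _ (Γ.σ1 z) _
          (Relation.EqvGen.rel _ _ (Or.inr ⟨hzD, rfl⟩)) (Relation.EqvGen.rel _ _ (Or.inl ?_))
        unfold RibbonGraph.bdryMap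
        rw [if_pos hzD]
      · refine Relation.EqvGen.rel _ _ (Or.inl ?_)
        unfold RibbonGraph.bdryMap
        rw [if_neg hzD]
  have hconn : Relation.EqvGen (Γ.compRel (Γ.deadIn A)) e (Γ.σ1 e) := hSOg_eqv _ _ hkey
  constructor
  · -- component count
    unfold RibbonGraph.kComp
    refine Stmt17Aux.card_quot_congr ?_ ?_
    · intro x y hxy
      rcases hxy with h | ⟨hmem, rfl⟩
      · exact Relation.EqvGen.rel _ _ (Or.inl h)
      rcases Finset.mem_union.mp hmem with hD | hS
      · exact Relation.EqvGen.rel _ _ (Or.inr ⟨hD, rfl⟩)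
      rcases Finset.mem_insert.mp hS with rfl | hS2
      · exact hconn
      · rw [Finset.mem_singleton] at hS2
        subst hS2
        have := Relation.EqvGen.symm _ _ hconn
        rwa [Stmt17Aux.sig1_invol]
    · intro x y hxy
      rcases hxy with h | ⟨hmem, rfl⟩
      · exact Relation.EqvGen.rel _ _ (Or.inl h)
      · exact Relation.EqvGen.rel _ _ (Or.inr ⟨Finset.mem_union_left _ hmem, rfl⟩)
  · -- face count
    have hfunext : Γ.bdryMap (Γ.deadIn A ∪ {e, Γ.σ1 e})
        = Γ.bdryMap (Γ.deadIn A) ∘ Equiv.swap e (Γ.σ1 e) := by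
      funext i
      rcases eq_or_ne i e with rfl | hie
      · rw [Function.comp_apply, Equiv.swap_apply_left]
        unfold RibbonGraph.bdryMap
        rw [if_pos (Finset.mem_union_right _ (Finset.mem_insert_self _ _)),
          if_neg hsig1eD]
      rcases eq_or_ne i (Γ.σ1 e) with rfl | his
      · rw [Function.comp_apply, Equiv.swap_apply_right]
        unfold RibbonGraph.bdryMap
        rw [if_pos (Finset.mem_union_right _ (Finset.mem_insert_of_mem
          (Finset.mem_singleton_self _))), if_neg heD, Stmt17Aux.sig1_invol]
      · rw [Function.comp_apply, Equiv.swap_apply_of_ne_of_ne hie his]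
        have hmem : i ∈ Γ.deadIn A ∪ {e, Γ.σ1 e} ↔ i ∈ Γ.deadIn A := by
          simp [Finset.mem_union, Finset.mem_insert, Finset.mem_singleton, hie, his]
        unfold RibbonGraph.bdryMap
        by_cases hiD : i ∈ Γ.deadIn A
        · rw [if_pos (hmem.mpr hiD), if_pos hiD]
        · rw [if_neg (fun h => hiD (hmem.mp h)), if_neg hiD]
    show orbCountOf (Γ.bdryMap (Γ.deadIn A ∪ {e, Γ.σ1 e}))
        = orbCountOf (Γ.bdryMap (Γ.deadIn A)) + 1
    rw [hfunext]
    exact Stmt17Aux.split_count hgbij (hne e) hkey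
end
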